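/- arXiv:2602.21390 — 2 statements merged into one kernel-verified Lean document; each statement's English description precedes it below -/
import Mathlib

section
/- (Example 4.4, multiclass OI with a linear kernel.) Let X = {x ∈ ℝ^r : ‖x‖_2 ≤ 1}, let H₀ = ℝ^r × ℝ^d with φ(x,p) := (x,p), and let Φ(x,p) : ℝ^d → H₀^d be θ ↦ (θ_1·φ(x,p), …, θ_d·φ(x,p)). Take Z = Δ^d, realized labels y_1,…,y_T ∈ {1,…,d} with targets z_t := e_{y_t}, and suppose the EVI condition holds with tolerances ε_t ≤ 2. Let θ_1,…,θ_d ∈ ℝ^r and θ′_1,…,θ′_d ∈ ℝ^d satisfy ‖θ_j‖_2 + ‖θ′_j‖_2 ≤ B for every j. Then | Σ_{t=1}^T E_{p∼D_t}[ (⟨x_t, θ_{y_t}⟩ + ⟨p, θ′_{y_t}⟩) − Σ_{j=1}^d p_j·(⟨x_t, θ_j⟩ + ⟨p, θ′_j⟩) ] | ≤ 4·d·B·sqrt(T). -/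
open scoped BigOperators RealInnerProductSpace

/-- A finitely supported probability distribution, given by finitely many
weighted atoms. -/
structure FinDist (α : Type*) where
  n : ℕ
  w : Fin n → ℝ
  pt : Fin n → α
  w_nonneg : ∀ i, 0 ≤ w i
  w_sum : ∑ i, w i = 1

namespace FinDist

noncomputable def exp {α V : Type*} [AddCommMonoid V] [Module ℝ V]
    (D : FinDist α) (f : α → V) : V :=
  ∑ i, D.w i • f (D.pt i)

def support {α : Type*} (D : FinDist α) : Set α :=
  {a | ∃ i, D.w i ≠ 0 ∧ D.pt i = a}

end FinDist

section Stmt5Aux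

variable {r d : ℕ}

/-- The big Hilbert space `H₀^d`. -/
abbrev Stmt5H (r d : ℕ) : Type :=
  WithLp 2 (∀ _ : Fin d, WithLp 2 (EuclideanSpace ℝ (Fin r) × EuclideanSpace ℝ (Fin d)))

/-- `Φ(x,p)(e_y - p)`. -/
noncomputable abbrev stmt5v (xt : EuclideanSpace ℝ (Fin r)) (yt : Fin d)
    (p : EuclideanSpace ℝ (Fin d)) : Stmt5H r d :=
  (WithLp.equiv 2 (∀ _ : Fin d,
      WithLp 2 (EuclideanSpace ℝ (Fin r) × EuclideanSpace ℝ (Fin d)))).symm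
    (fun j => ((EuclideanSpace.single yt (1 : ℝ) - p) j) •
      (WithLp.equiv 2 (EuclideanSpace ℝ (Fin r) × EuclideanSpace ℝ (Fin d))).symm (xt, p))

/-- The coefficient vector `Θ = (θ_j, θ'_j)_j`. -/
noncomputable abbrev stmt5Θ (θ : Fin d → EuclideanSpace ℝ (Fin r))
    (θ' : Fin d → EuclideanSpace ℝ (Fin d)) : Stmt5H r d :=
  (WithLp.equiv 2 (∀ _ : Fin d,
      WithLp 2 (EuclideanSpace ℝ (Fin r) × EuclideanSpace ℝ (Fin d)))).symm
    (fun j => (WithLp.equiv 2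
        (EuclideanSpace ℝ (Fin r) × EuclideanSpace ℝ (Fin d))).symm (θ j, θ' j))

lemma stmt5_inner_theta (θ : Fin d → EuclideanSpace ℝ (Fin r))
    (θ' : Fin d → EuclideanSpace ℝ (Fin d))
    (xt : EuclideanSpace ℝ (Fin r)) (yt : Fin d) (p : EuclideanSpace ℝ (Fin d)) :
    ⟪stmt5Θ θ θ', stmt5v xt yt p⟫
      = (⟪xt, θ yt⟫ + ⟪p, θ' yt⟫) - ∑ j, p j * (⟪xt, θ j⟫ + ⟪p, θ' j⟫) := by
  rw [PiLp.inner_apply]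
  have : ∀ j : Fin d,
      ⟪((WithLp.equiv 2 (∀ _ : Fin d,
          WithLp 2 (EuclideanSpace ℝ (Fin r) × EuclideanSpace ℝ (Fin d)))).symm
          (fun j => (WithLp.equiv 2
            (EuclideanSpace ℝ (Fin r) × EuclideanSpace ℝ (Fin d))).symm (θ j, θ' j))) j,
        ((WithLp.equiv 2 (∀ _ : Fin d,
          WithLp 2 (EuclideanSpace ℝ (Fin r) × EuclideanSpace ℝ (Fin d)))).symm
          (fun j => ((EuclideanSpace.single yt (1 : ℝ) - p) j) •
            (WithLp.equiv 2
              (EuclideanSpace ℝ (Fin r) × EuclideanSpace ℝ (Fin d))).symm (xt, p))) j⟫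
      = ((if j = yt then (1:ℝ) else 0) - p j) * (⟪xt, θ j⟫ + ⟪p, θ' j⟫) := by
    intro j
    simp only [WithLp.equiv_symm_apply, PiLp.toLp_apply]
    rw [real_inner_smul_right, WithLp.prod_inner_apply]
    simp only [WithLp.toLp_fst, WithLp.toLp_snd]
    rw [real_inner_comm (θ j) xt, real_inner_comm (θ' j) p]
    simp [EuclideanSpace.single_apply]
  rw [Finset.sum_congr rfl (fun j _ => this j)]
  rw [show ∀ f : Fin d → ℝ, ∑ j, ((if j = yt then (1:ℝ) else 0) - p j) * f j
      = ∑ j, ((if j = yt then (1:ℝ) else 0) * f j) - ∑ j, p j * f j by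
    intro f; rw [← Finset.sum_sub_distrib]; exact Finset.sum_congr rfl fun j _ => by ring]
  simp [Finset.sum_ite_eq']

lemma stmt5_norm_v_le (xt : EuclideanSpace ℝ (Fin r)) (hx : ‖xt‖ ≤ 1) (yt : Fin d)
    (p : EuclideanSpace ℝ (Fin d)) (hp0 : ∀ j, 0 ≤ p j) (hp1 : ∑ j, p j = 1) :
    ‖stmt5v xt yt p‖ ≤ 2 := by
  have hple : ∀ j, p j ≤ 1 := by
    intro j
    calc p j ≤ ∑ i, p i := Finset.single_le_sum (fun i _ => hp0 i) (Finset.mem_univ j)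
    _ = 1 := hp1
  have hnormp : ‖p‖ ^ 2 ≤ 1 := by
    rw [EuclideanSpace.norm_eq, Real.sq_sqrt (by positivity)]
    calc ∑ j, ‖p j‖ ^ 2 ≤ ∑ j, p j := by
          refine Finset.sum_le_sum fun j _ => ?_
          rw [Real.norm_eq_abs, sq_abs, sq]
          exact mul_le_of_le_one_left (hp0 j) (hple j)
      _ = 1 := hp1
  have hsq : ‖stmt5v xt yt p‖ ^ 2
      = (∑ j, ((EuclideanSpace.single yt (1 : ℝ) - p) j) ^ 2) * (‖xt‖^2 + ‖p‖^2) := by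
    rw [PiLp.norm_sq_eq_of_L2, Finset.sum_mul]
    refine Finset.sum_congr rfl fun j _ => ?_
    have hjj : stmt5v xt yt p j = ((EuclideanSpace.single yt (1 : ℝ) - p) j) •
        (WithLp.equiv 2 (EuclideanSpace ℝ (Fin r) × EuclideanSpace ℝ (Fin d))).symm (xt, p) :=
      rfl
    rw [hjj, norm_smul, mul_pow, Real.norm_eq_abs, sq_abs,
      WithLp.prod_norm_sq_eq_of_L2]
    simp
  have hcoef : ∑ j, ((EuclideanSpace.single yt (1 : ℝ) - p) j) ^ 2 ≤ 2 := by
    have : ∀ j : Fin d, ((EuclideanSpace.single yt (1 : ℝ) - p) j) ^ 2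
        ≤ (if j = yt then (1:ℝ) else 0) + p j := by
      intro j
      have hj : (EuclideanSpace.single yt (1 : ℝ) - p) j
          = (if j = yt then (1:ℝ) else 0) - p j := by
        simp [EuclideanSpace.single_apply]
      rw [hj]
      have h0 := hp0 j; have h1 := hple j
      by_cases h : j = yt <;> simp [h] <;> nlinarith [hp0 yt, hple yt]
    calc ∑ j, ((EuclideanSpace.single yt (1 : ℝ) - p) j) ^ 2
        ≤ ∑ j, ((if j = yt then (1:ℝ) else 0) + p j) :=
          Finset.sum_le_sum fun j _ => this j
      _ = 2 := by
          rw [Finset.sum_add_distrib, hp1]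
          simp [Finset.sum_ite_eq']
          norm_num
  have h4 : ‖stmt5v xt yt p‖ ^ 2 ≤ 4 := by
    rw [hsq]
    have hxsq : ‖xt‖ ^ 2 ≤ 1 := by nlinarith [norm_nonneg xt]
    have hnn : (0:ℝ) ≤ ∑ j, ((EuclideanSpace.single yt (1 : ℝ) - p) j) ^ 2 := by positivity
    nlinarith [hnormp]
  nlinarith [norm_nonneg (stmt5v xt yt p)]

lemma FinDist.inner_exp {α E : Type*} [NormedAddCommGroup E] [InnerProductSpace ℝ E]
    (D : FinDist α) (a : E) (f : α → E) :
    ⟪a, D.exp f⟫ = D.exp fun p => ⟪a, f p⟫ := by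
  simp [FinDist.exp, inner_sum, real_inner_smul_right, smul_eq_mul]

lemma FinDist.norm_exp_le {α E : Type*} [NormedAddCommGroup E] [NormedSpace ℝ E]
    (D : FinDist α) (f : α → E) (C : ℝ) (hC0 : 0 ≤ C)
    (hC : ∀ a ∈ D.support, ‖f a‖ ≤ C) :
    ‖D.exp f‖ ≤ C := by
  calc ‖∑ i, D.w i • f (D.pt i)‖ ≤ ∑ i, ‖D.w i • f (D.pt i)‖ := norm_sum_le _ _
    _ ≤ ∑ i, D.w i * C := by
        refine Finset.sum_le_sum fun i _ => ?_
        rw [norm_smul, Real.norm_eq_abs, abs_of_nonneg (D.w_nonneg i)]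
        by_cases h : D.w i = 0
        · simp [h]
        · exact mul_le_mul_of_nonneg_left (hC _ ⟨i, h, rfl⟩) (D.w_nonneg i)
    _ = C := by rw [← Finset.sum_mul, D.w_sum, one_mul]

end Stmt5Aux

/-- Example 4.4, multiclass OI with a linear kernel:
`X` is the unit ball of `ℝ^r`, `H₀ = ℝ^r × ℝ^d` (with the `ℓ²` product inner
product), `φ(x,p) = (x,p)`, `Z = Δ^d`, targets `e_{y_t}`, EVI tolerances
`ε_t ≤ 2`.  For coefficients with `‖θ_j‖ + ‖θ'_j‖ ≤ B`, the OI gap of the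
distinguisher `f(x,p,y) = ⟨x, θ_y⟩ + ⟨p, θ'_y⟩` is at most `4·d·B·√T`. -/
theorem stmt_5
    {r d : ℕ} (hr : 1 ≤ r) (hd : 1 ≤ d)
    (T : ℕ) (hT : 1 ≤ T)
    (x : ℕ → EuclideanSpace ℝ (Fin r)) (hx : ∀ t < T, ‖x t‖ ≤ 1)
    (y : ℕ → Fin d)
    (D : ℕ → FinDist (EuclideanSpace ℝ (Fin d)))
    (hD : ∀ t < T, (D t).support ⊆ {p : EuclideanSpace ℝ (Fin d) |
        (∀ j, 0 ≤ p j) ∧ ∑ j, p j = 1})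
    (ε : ℕ → ℝ) (hε : ∀ t < T, 0 ≤ ε t) (hεle : ∀ t < T, ε t ≤ 2)
    (hEVI : ∀ t < T, ∀ z' ∈ {p : EuclideanSpace ℝ (Fin d) |
        (∀ j, 0 ≤ p j) ∧ ∑ j, p j = 1},
      (D t).exp (fun p =>
        (⟪(∑ τ ∈ Finset.range t, (D τ).exp (fun q =>
            (WithLp.equiv 2 (∀ _ : Fin d,
                WithLp 2 (EuclideanSpace ℝ (Fin r) × EuclideanSpace ℝ (Fin d)))).symm
              (fun j => ((EuclideanSpace.single (y τ) (1 : ℝ) - q) j) •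
                (WithLp.equiv 2
                  (EuclideanSpace ℝ (Fin r) × EuclideanSpace ℝ (Fin d))).symm
                  (x τ, q)))),
          (WithLp.equiv 2 (∀ _ : Fin d,
              WithLp 2 (EuclideanSpace ℝ (Fin r) × EuclideanSpace ℝ (Fin d)))).symm
            (fun j => ((z' - p) j) •
              (WithLp.equiv 2
                (EuclideanSpace ℝ (Fin r) × EuclideanSpace ℝ (Fin d))).symm
                (x t, p))⟫)) ≤ ε t)
    (B : ℝ)
    (θ : Fin d → EuclideanSpace ℝ (Fin r)) (θ' : Fin d → EuclideanSpace ℝ (Fin d))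
    (hB : ∀ j, ‖θ j‖ + ‖θ' j‖ ≤ B) :
    |∑ t ∈ Finset.range T, (D t).exp (fun p =>
        ((⟪x t, θ (y t)⟫ + ⟪p, θ' (y t)⟫)
          - ∑ j, p j * (⟪x t, θ j⟫ + ⟪p, θ' j⟫)))| ≤
      4 * (d : ℝ) * B * Real.sqrt (T : ℝ) := by
  have hB0 : 0 ≤ B :=
    le_trans (by positivity) (hB ⟨0, hd⟩)
  -- the partial sums `M t`
  set M : ℕ → Stmt5H r d := fun t =>
    ∑ τ ∈ Finset.range t, (D τ).exp (fun q => stmt5v (x τ) (y τ) q) with hM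
  -- EVI instantiated at `z' = e_{y t}`
  have hsingle : ∀ t, (EuclideanSpace.single (y t) (1:ℝ)) ∈
      {p : EuclideanSpace ℝ (Fin d) | (∀ j, 0 ≤ p j) ∧ ∑ j, p j = 1} := by
    intro t
    constructor
    · intro j; rw [EuclideanSpace.single_apply]; positivity
    · simp [EuclideanSpace.single_apply, Finset.sum_ite_eq']
  have hEVI' : ∀ t < T,
      (D t).exp (fun p => ⟪M t, stmt5v (x t) (y t) p⟫) ≤ ε t := by
    intro t ht
    exact hEVI t ht (EuclideanSpace.single (y t) (1:ℝ)) (hsingle t)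
  -- norm of each increment
  have hw : ∀ t < T, ‖(D t).exp (fun q => stmt5v (x t) (y t) q)‖ ≤ 2 := by
    intro t ht
    refine FinDist.norm_exp_le _ _ _ (by norm_num) fun a ha => ?_
    obtain ⟨h0, h1⟩ := hD t ht ha
    exact stmt5_norm_v_le (x t) (hx t ht) (y t) a h0 h1
  -- bound on `‖M t‖²` by induction
  have hMbound : ∀ t ≤ T, ‖M t‖ ^ 2 ≤ 8 * t := by
    intro t
    induction t with
    | zero => intro _; simp [hM]
    | succ t ih =>
      intro hle
      have ht : t < T := lt_of_lt_of_le (Nat.lt_succ_self t) hle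
      have ih' := ih (le_of_lt ht)
      have hstep : M (t+1) = M t + (D t).exp (fun q => stmt5v (x t) (y t) q) := by
        rw [hM]; exact Finset.sum_range_succ _ t
      set w := (D t).exp (fun q => stmt5v (x t) (y t) q) with hwdef
      have hinner : ⟪M t, w⟫ ≤ 2 := by
        rw [hwdef, FinDist.inner_exp]
        exact le_trans (hEVI' t ht) (hεle t ht)
      have hwle : ‖w‖ ≤ 2 := hw t ht
      rw [hstep, norm_add_sq_real]
      push_cast
      nlinarith [norm_nonneg w]
  -- the LHS equals `⟪Θ, M T⟫`
  have hgap : ∑ t ∈ Finset.range T, (D t).exp (fun p =>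
        ((⟪x t, θ (y t)⟫ + ⟪p, θ' (y t)⟫)
          - ∑ j, p j * (⟪x t, θ j⟫ + ⟪p, θ' j⟫)))
      = ⟪stmt5Θ θ θ', M T⟫ := by
    rw [hM, inner_sum]
    refine Finset.sum_congr rfl fun t _ => ?_
    rw [FinDist.inner_exp]
    congr 1
    funext p
    exact (stmt5_inner_theta θ θ' (x t) (y t) p).symm
  rw [hgap]
  -- bound on `‖Θ‖`
  have hΘ : ‖stmt5Θ θ θ'‖ ^ 2 ≤ d * B ^ 2 := by
    rw [PiLp.norm_sq_eq_of_L2]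
    calc ∑ j, ‖(WithLp.equiv 2
          (EuclideanSpace ℝ (Fin r) × EuclideanSpace ℝ (Fin d))).symm (θ j, θ' j)‖ ^ 2
        ≤ ∑ _j : Fin d, B ^ 2 := by
          refine Finset.sum_le_sum fun j _ => ?_
          rw [WithLp.prod_norm_sq_eq_of_L2]
          have := hB j
          have h1 := norm_nonneg (θ j); have h2 := norm_nonneg (θ' j)
          simp only [WithLp.equiv_symm_apply, WithLp.toLp_fst, WithLp.toLp_snd]
          nlinarith
      _ = d * B ^ 2 := by simp [mul_comm]
  have hMT := hMbound T le_rfl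
  have habs : |⟪stmt5Θ θ θ', M T⟫| ≤ ‖stmt5Θ θ θ'‖ * ‖M T‖ :=
    abs_real_inner_le_norm _ _
  refine le_trans habs ?_
  have hd1 : (1:ℝ) ≤ d := by exact_mod_cast hd
  have hT0 : (0:ℝ) ≤ T := by positivity
  have hsq : (‖stmt5Θ θ θ'‖ * ‖M T‖) ^ 2 ≤ (4 * d * B * Real.sqrt T) ^ 2 := by
    rw [mul_pow]
    have h1 := mul_le_mul hΘ hMT (by positivity) (by positivity)
    have h2 : (4 * (d:ℝ) * B * Real.sqrt T) ^ 2 = 16 * d^2 * B^2 * T := by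
      rw [mul_pow, Real.sq_sqrt hT0]; ring
    rw [h2]
    nlinarith [sq_nonneg B, mul_nonneg (sq_nonneg B) hT0]
  exact le_of_pow_le_pow_left₀ two_ne_zero (by positivity) hsq
end

section
/- (Corollary 4.7, indistinguishability of conditional expectations for vector-valued outcomes.) Let Y = Z be a nonempty subset of ℝ^d with ‖z − z′‖_2 ≤ D for all z, z′ ∈ Z, and suppose ‖Φ(x,p)‖_op² ≤ G for all x ∈ X, p ∈ Z. Let y_1,…,y_T ∈ Z be realized outcomes with targets z_t := y_t, and suppose the EVI condition holds with tolerances ε_t ≤ D²G/2. Then for every h ∈ H, | Σ_{t=1}^T E_{p∼D_t}[ ⟨h, Φ(x_t,p)(y_t − p)⟩_H ] | ≤ ‖h‖_H · sqrt( 2·T·D²·G ). (Equivalently, with generated distributions equal to the point mass at p, the distinguishers f(x,p,y) = ⟨h, Φ(x,p)(y)⟩_H have OIGap_T(f) bounded by this quantity.) -/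
open scoped BigOperators RealInnerProductSpace

lemma exp_inner {H : Type*} [NormedAddCommGroup H] [InnerProductSpace ℝ H]
    {α : Type*} (D : FinDist α) (h : H) (g : α → H) :
    (D.exp fun p => (⟪h, g p⟫ : ℝ)) = ⟪h, D.exp g⟫ := by
  simp [FinDist.exp, inner_sum, real_inner_smul_right, smul_eq_mul]

lemma exp_norm_le {H : Type*} [NormedAddCommGroup H] [InnerProductSpace ℝ H]
    {α : Type*} (D : FinDist α) (g : α → H) (B : ℝ)
    (hg : ∀ a ∈ D.support, ‖g a‖ ≤ B) : ‖D.exp g‖ ≤ B := by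
  calc ‖D.exp g‖ ≤ ∑ i, ‖D.w i • g (D.pt i)‖ := norm_sum_le _ _
    _ ≤ ∑ i, D.w i * B := by
        apply Finset.sum_le_sum
        intro i _
        rw [norm_smul, Real.norm_eq_abs, abs_of_nonneg (D.w_nonneg i)]
        rcases eq_or_ne (D.w i) 0 with h0 | h0
        · simp [h0]
        · exact mul_le_mul_of_nonneg_left (hg _ ⟨i, h0, rfl⟩) (D.w_nonneg i)
    _ = B := by rw [← Finset.sum_mul, D.w_sum, one_mul]

/-- Corollary 4.7: indistinguishability of conditional
expectations for vector-valued outcomes.  With `Y = Z`, targets `z_t = y_t`,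
and EVI tolerances `ε_t ≤ D²G/2`, for every `h ∈ H`:
`|∑_t E_{p∼D_t} ⟪h, Φ(x_t,p)(y_t − p)⟫| ≤ ‖h‖ · sqrt(2·T·D²·G)`. -/
theorem stmt_7
    {H : Type*} [NormedAddCommGroup H] [InnerProductSpace ℝ H] [CompleteSpace H]
    {X : Type*} [Nonempty X] {d : ℕ} (hd : 1 ≤ d)
    (Z : Set (EuclideanSpace ℝ (Fin d))) (hZ : Z.Nonempty)
    (Φ : X → EuclideanSpace ℝ (Fin d) → (EuclideanSpace ℝ (Fin d) →L[ℝ] H))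
    (Dm G : ℝ)
    (hDiam : ∀ z ∈ Z, ∀ z' ∈ Z, ‖z - z'‖ ≤ Dm)
    (hG : ∀ (x : X), ∀ p ∈ Z, ‖Φ x p‖ ^ 2 ≤ G)
    (T : ℕ) (hT : 1 ≤ T)
    (x : ℕ → X) (y : ℕ → EuclideanSpace ℝ (Fin d)) (hy : ∀ t < T, y t ∈ Z)
    (D : ℕ → FinDist (EuclideanSpace ℝ (Fin d)))
    (hD : ∀ t < T, (D t).support ⊆ Z)
    (ε : ℕ → ℝ) (hε : ∀ t < T, 0 ≤ ε t) (hεle : ∀ t < T, ε t ≤ Dm ^ 2 * G / 2)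
    (hEVI : ∀ t < T, ∀ z' ∈ Z,
      (D t).exp (fun p =>
        (⟪(∑ τ ∈ Finset.range t, (D τ).exp (fun q => Φ (x τ) q (y τ - q))),
          Φ (x t) p (z' - p)⟫)) ≤ ε t)
    (h : H) :
    |∑ t ∈ Finset.range T, (D t).exp (fun p => (⟪h, Φ (x t) p (y t - p)⟫))| ≤
      ‖h‖ * Real.sqrt (2 * (T : ℝ) * Dm ^ 2 * G) := by
  obtain ⟨p0, hp0⟩ := hZ
  have hG0 : 0 ≤ G := le_trans (sq_nonneg _) (hG (Classical.arbitrary X) p0 hp0)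
  have hDm0 : 0 ≤ Dm := le_trans (by simp) (hDiam p0 hp0 p0 hp0)
  set v : ℕ → H := fun t => (D t).exp (fun q => Φ (x t) q (y t - q)) with hv
  set M : ℕ → H := fun t => ∑ τ ∈ Finset.range t, v τ with hM
  have hvnorm : ∀ t < T, ‖v t‖ ≤ Real.sqrt G * Dm := by
    intro t ht
    apply exp_norm_le
    intro a ha
    have haZ : a ∈ Z := hD t ht ha
    calc ‖Φ (x t) a (y t - a)‖ ≤ ‖Φ (x t) a‖ * ‖y t - a‖ :=
          (Φ (x t) a).le_opNorm _
      _ ≤ Real.sqrt G * Dm := by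
          apply mul_le_mul _ (hDiam _ (hy t ht) _ haZ) (norm_nonneg _)
            (Real.sqrt_nonneg _)
          rw [← Real.sqrt_sq (norm_nonneg (Φ (x t) a))]
          exact Real.sqrt_le_sqrt (hG (x t) a haZ)
  have key : ∀ t ≤ T, ‖M t‖ ^ 2 ≤ 2 * t * Dm ^ 2 * G := by
    intro t
    induction t with
    | zero => intro _; simp [hM]
    | succ t ih =>
      intro hle
      have ht : t < T := lt_of_lt_of_le (Nat.lt_succ_self t) hle
      have ihv := ih (le_of_lt ht)
      have hMsucc : M (t + 1) = M t + v t := Finset.sum_range_succ v t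
      have hcross : ⟪M t, v t⟫ ≤ ε t := by
        have := hEVI t ht (y t) (hy t ht)
        rwa [exp_inner (D t) (M t) (fun p => Φ (x t) p (y t - p))] at this
      have hvsq : ‖v t‖ ^ 2 ≤ G * Dm ^ 2 := by
        have h1 : ‖v t‖ ^ 2 ≤ (Real.sqrt G * Dm) ^ 2 :=
          pow_le_pow_left₀ (norm_nonneg _) (hvnorm t ht) 2
        calc ‖v t‖ ^ 2 ≤ (Real.sqrt G * Dm) ^ 2 := h1
          _ = G * Dm ^ 2 := by rw [mul_pow, Real.sq_sqrt hG0]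
      have hεt := hεle t ht
      have hexp : ‖M (t + 1)‖ ^ 2 = ‖M t‖ ^ 2 + 2 * ⟪M t, v t⟫ + ‖v t‖ ^ 2 := by
        rw [hMsucc, @norm_add_sq_real]
      rw [hexp]
      push_cast
      nlinarith
  have hfinal : ‖M T‖ ≤ Real.sqrt (2 * (T : ℝ) * Dm ^ 2 * G) := by
    rw [show (2 * (T : ℝ) * Dm ^ 2 * G) = ‖M T‖^2 + (2 * (T:ℝ) * Dm^2 * G - ‖M T‖^2) by ring]
    calc ‖M T‖ = Real.sqrt (‖M T‖ ^ 2) := by rw [Real.sqrt_sq (norm_nonneg _)]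
      _ ≤ _ := Real.sqrt_le_sqrt (by have := key T le_rfl; linarith)
  have hsum : ∑ t ∈ Finset.range T, (D t).exp (fun p => (⟪h, Φ (x t) p (y t - p)⟫ : ℝ))
      = ⟪h, M T⟫ := by
    rw [hM, inner_sum]
    exact Finset.sum_congr rfl fun t _ => exp_inner (D t) h _
  rw [hsum]
  calc |⟪h, M T⟫| ≤ ‖h‖ * ‖M T‖ := abs_real_inner_le_norm h (M T)
    _ ≤ ‖h‖ * Real.sqrt (2 * (T : ℝ) * Dm ^ 2 * G) :=
        mul_le_mul_of_nonneg_left hfinal (norm_nonneg h)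
end
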